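/- Let Γ be a countable discrete group with a proper length function ℓ and balls B_k := {γ : ℓ(γ) ≤ k}, let ρ : Γ ↷ (X,ν) be a measurable action on a probability space, and let P_X be the averaging projection on L²(X,ν). Then ρ is asymptotically expanding in measure if and only if P_X is ρ-quasi-local. -/

import Mathlib

open MeasureTheory ENNReal Filter

noncomputable section

/-- The operator norm of the compression `χ_A T χ_C` of an operator
`T ∈ 𝔅(L²(X,ν))`, computed as the supremum of `‖χ_A (T f)‖` over all `f` in the unit
ball that are (a.e.) supported in `C`. -/
def cutNorm {X : Type*} [MeasurableSpace X] {ν : Measure X}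
    (T : Lp ℝ 2 ν →L[ℝ] Lp ℝ 2 ν) (A C : Set X) : ℝ :=
  sSup ((fun f : Lp ℝ 2 ν => (eLpNorm (A.indicator (fun x => T f x)) 2 ν).toReal) ''
    { f : Lp ℝ 2 ν | ‖f‖ ≤ 1 ∧ ∀ᵐ x ∂ν, x ∉ C → f x = 0 })

/-- `B_k · A = ⋃_{ℓ(γ) ≤ k} γ·A`, the translate of `A ⊆ X` by the ball of radius `k`
of the length function `ℓ`. -/
def ballSmul {Γ X : Type*} [Group Γ] [MulAction Γ X] (ℓ : Γ → ℕ) (k : ℕ)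
    (A : Set X) : Set X :=
  ⋃ γ ∈ {γ : Γ | ℓ γ ≤ k}, (fun x => γ • x) '' A

/-- An operator `T ∈ 𝔅(L²(X,ν))` is `ρ`-quasi-local if for every `ε > 0` there is
`k ∈ ℕ` such that `‖χ_A T χ_C‖ < ε` whenever `A, C` are measurable with
`ν((B_k·A) ∩ C) = 0`. -/
def QuasiLocal {Γ X : Type*} [Group Γ] [MulAction Γ X] [MeasurableSpace X]
    (ℓ : Γ → ℕ) (ν : Measure X) (T : Lp ℝ 2 ν →L[ℝ] Lp ℝ 2 ν) : Prop :=
  ∀ ε : ℝ, 0 < ε → ∃ k : ℕ, ∀ A C : Set X, MeasurableSet A → MeasurableSet C →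
    ν (ballSmul ℓ k A ∩ C) = 0 → cutNorm T A C < ε

/-- An operator `T ∈ 𝔅(L²(X,ν))` has finite `ρ`-propagation if there is `k ∈ ℕ` such
that `χ_A T χ_C = 0` whenever `A, C` are measurable with `ν((B_k·A) ∩ C) = 0`; this is
expressed by saying that `T f` vanishes a.e. on `A` whenever `f` vanishes a.e. off
`C`. -/
def FinitePropagation {Γ X : Type*} [Group Γ] [MulAction Γ X] [MeasurableSpace X]
    (ℓ : Γ → ℕ) (ν : Measure X) (T : Lp ℝ 2 ν →L[ℝ] Lp ℝ 2 ν) : Prop :=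
  ∃ k : ℕ, ∀ A C : Set X, MeasurableSet A → MeasurableSet C →
    ν (ballSmul ℓ k A ∩ C) = 0 →
    ∀ f : Lp ℝ 2 ν, (∀ᵐ x ∂ν, x ∉ C → f x = 0) → (∀ᵐ x ∂ν, x ∈ A → T f x = 0)

/-- The action `ρ : Γ ↷ (X,ν)` on a probability space is asymptotically expanding in
measure: there are `c̲ : (0,1/2] → ℝ_{>0}` and `k̲ : (0,1/2] → ℕ` such that every
measurable `A` with `α ≤ ν(A) ≤ 1/2` satisfies `ν(B_{k̲(α)}·A) > (1+c̲(α))·ν(A)`. -/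
def AsymptoticallyExpanding {Γ X : Type*} [Group Γ] [MulAction Γ X] [MeasurableSpace X]
    (ℓ : Γ → ℕ) (ν : Measure X) : Prop :=
  ∃ (c : ℝ → ℝ) (k : ℝ → ℕ), (∀ α ∈ Set.Ioc (0 : ℝ) (1/2), 0 < c α) ∧
    ∀ α ∈ Set.Ioc (0 : ℝ) (1/2), ∀ A : Set X, MeasurableSet A →
      ENNReal.ofReal α ≤ ν A → ν A ≤ 1/2 →
      (1 + ENNReal.ofReal (c α)) * ν A < ν (ballSmul ℓ (k α) A)

section BallSmul
variable {Γ X : Type*} [Group Γ] [MulAction Γ X] {ℓ : Γ → ℕ}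

lemma subset_ballSmul (hl1 : ℓ 1 = 0) (k : ℕ) (A : Set X) : A ⊆ ballSmul ℓ k A :=
  fun x hx => Set.mem_biUnion (show ℓ (1:Γ) ≤ k by simp [hl1]) ⟨x, hx, one_smul Γ x⟩

lemma ballSmul_mono {j k : ℕ} (h : j ≤ k) (A : Set X) :
    ballSmul ℓ j A ⊆ ballSmul ℓ k A := by
  intro x hx
  obtain ⟨γ, hγ, hxγ⟩ := Set.mem_iUnion₂.1 hx
  exact Set.mem_biUnion (hγ.trans h) hxγ

lemma ballSmul_mono_set {A B : Set X} (h : A ⊆ B) (k : ℕ) :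
    ballSmul ℓ k A ⊆ ballSmul ℓ k B := by
  intro x hx
  obtain ⟨γ, hγ, y, hy, rfl⟩ := Set.mem_iUnion₂.1 hx
  exact Set.mem_biUnion hγ ⟨y, h hy, rfl⟩

lemma ballSmul_ballSmul (hlsub : ∀ γ₁ γ₂ : Γ, ℓ (γ₁ * γ₂) ≤ ℓ γ₁ + ℓ γ₂)
    (j k : ℕ) (A : Set X) :
    ballSmul ℓ j (ballSmul ℓ k A) ⊆ ballSmul ℓ (j + k) A := by
  intro x hx
  obtain ⟨γ, hγ, y, hy, rfl⟩ := Set.mem_iUnion₂.1 hx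
  obtain ⟨δ, hδ, a, ha, rfl⟩ := Set.mem_iUnion₂.1 hy
  refine Set.mem_biUnion (show ℓ (γ * δ) ≤ j + k from (hlsub γ δ).trans (add_le_add hγ hδ))
    ⟨a, ha, ?_⟩
  simp [mul_smul]

lemma ballSmul_compl_subset (hlinv : ∀ γ : Γ, ℓ γ⁻¹ = ℓ γ) (k : ℕ) (S : Set X) :
    ballSmul ℓ k ((ballSmul ℓ k S)ᶜ) ⊆ Sᶜ := by
  intro x hx hxS
  obtain ⟨γ, hγ, y, hy, rfl⟩ := Set.mem_iUnion₂.1 hx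
  exact hy (Set.mem_biUnion (show ℓ γ⁻¹ ≤ k by rw [hlinv]; exact hγ)
    ⟨γ • y, hxS, inv_smul_smul γ y⟩)

lemma measurableSet_ballSmul [Countable Γ] [MeasurableSpace X]
    (hmeas : ∀ γ : Γ, Measurable (fun x : X => γ • x)) {A : Set X}
    (hA : MeasurableSet A) (k : ℕ) : MeasurableSet (ballSmul ℓ k A) := by
  refine MeasurableSet.biUnion (Set.to_countable _) (fun γ _ => ?_)
  have himg : (fun x => γ • x) '' A = (fun x : X => γ⁻¹ • x) ⁻¹' A := by
    ext x
    constructor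
    · rintro ⟨a, ha, rfl⟩; simpa [inv_smul_smul] using ha
    · intro h; exact ⟨γ⁻¹ • x, h, smul_inv_smul γ x⟩
  rw [himg]
  exact (hmeas γ⁻¹) hA

end BallSmul

section Expansion
variable {Γ X : Type*} [Group Γ] [Countable Γ] [MulAction Γ X] [MeasurableSpace X]
  {ℓ : Γ → ℕ} (hl1 : ℓ (1:Γ) = 0) (hlinv : ∀ γ : Γ, ℓ γ⁻¹ = ℓ γ)
  (hlsub : ∀ γ₁ γ₂ : Γ, ℓ (γ₁ * γ₂) ≤ ℓ γ₁ + ℓ γ₂)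
  {ν : Measure X} [IsProbabilityMeasure ν]
  (hmeas : ∀ γ : Γ, Measurable (fun x : X => γ • x))
  {α c : ℝ} {kb : ℕ} (hα : α ∈ Set.Ioc (0:ℝ) (1/2)) (hc : 0 < c)
  (hexp : ∀ A : Set X, MeasurableSet A → ENNReal.ofReal α ≤ ν A → ν A ≤ 1/2 →
    (1 + ENNReal.ofReal c) * ν A < ν (ballSmul ℓ kb A))

include hl1 hlsub hmeas hexp in
lemma phase1 (n : ℕ) {A : Set X} (hA : MeasurableSet A) (hαA : ENNReal.ofReal α ≤ ν A) :
    (1:ℝ≥0∞)/2 < ν (ballSmul ℓ (n * kb) A) ∨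
      (1 + ENNReal.ofReal c)^n * ENNReal.ofReal α ≤ ν (ballSmul ℓ (n * kb) A) := by
  induction n with
  | zero =>
    right
    rw [pow_zero, one_mul]
    exact hαA.trans (measure_mono (subset_ballSmul hl1 (0*kb) A))
  | succ n ih =>
    have hsub : ballSmul ℓ (n * kb) A ⊆ ballSmul ℓ ((n+1) * kb) A :=
      ballSmul_mono (Nat.mul_le_mul_right kb (Nat.le_succ n)) A
    rcases ih with h | h
    · exact Or.inl (h.trans_le (measure_mono hsub))
    · by_cases hhalf : (1:ℝ≥0∞)/2 < ν (ballSmul ℓ (n * kb) A)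
      · exact Or.inl (hhalf.trans_le (measure_mono hsub))
      · push_neg at hhalf
        have hS : MeasurableSet (ballSmul ℓ (n * kb) A) := measurableSet_ballSmul hmeas hA _
        have hge : ENNReal.ofReal α ≤ ν (ballSmul ℓ (n * kb) A) := by
          refine le_trans ?_ h
          conv_lhs => rw [← one_mul (ENNReal.ofReal α)]
          exact mul_le_mul_of_nonneg_right (one_le_pow_of_one_le' (le_add_right le_rfl) n) (by positivity)
        have hstep := hexp _ hS hge hhalf
        have hsub2 : ballSmul ℓ kb (ballSmul ℓ (n * kb) A) ⊆ ballSmul ℓ ((n+1) * kb) A := by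
          have := ballSmul_ballSmul hlsub kb (n * kb) A
          rwa [show kb + n * kb = (n+1) * kb by ring] at this
        right
        calc (1 + ENNReal.ofReal c)^(n+1) * ENNReal.ofReal α
            = (1 + ENNReal.ofReal c) * ((1 + ENNReal.ofReal c)^n * ENNReal.ofReal α) := by ring
          _ ≤ (1 + ENNReal.ofReal c) * ν (ballSmul ℓ (n * kb) A) := mul_le_mul_of_nonneg_left h (by positivity)
          _ ≤ ν (ballSmul ℓ ((n+1) * kb) A) :=
              le_trans hstep.le (measure_mono hsub2)

include hl1 hlinv hlsub hmeas hexp in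
lemma phase2 (n : ℕ) {S : Set X} (hS : MeasurableSet S) (hhalf : (1:ℝ≥0∞)/2 < ν S) :
    ν ((ballSmul ℓ (n * kb) S)ᶜ) < ENNReal.ofReal α ∨
      (1 + ENNReal.ofReal c)^n * ν ((ballSmul ℓ (n * kb) S)ᶜ) ≤ ν Sᶜ := by
  induction n with
  | zero =>
    right
    rw [pow_zero, one_mul]
    exact measure_mono (Set.compl_subset_compl.2 (subset_ballSmul hl1 (0*kb) S))
  | succ n ih =>
    set T : Set X := (ballSmul ℓ ((n+1) * kb) S)ᶜ with hT_def
    have hTsub : T ⊆ (ballSmul ℓ (kb) (ballSmul ℓ (n * kb) S))ᶜ := by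
      refine Set.compl_subset_compl.2 ?_
      have := ballSmul_ballSmul hlsub kb (n * kb) S
      rwa [show kb + n * kb = (n+1) * kb by ring] at this
    have hkey : ballSmul ℓ kb T ⊆ (ballSmul ℓ (n * kb) S)ᶜ :=
      (ballSmul_mono_set hTsub kb).trans (ballSmul_compl_subset hlinv kb _)
    by_cases hcase : ν T < ENNReal.ofReal α
    · exact Or.inl hcase
    · push_neg at hcase
      have hT : MeasurableSet T := (measurableSet_ballSmul hmeas hS _).compl
      have hTS : T ⊆ Sᶜ :=
        Set.compl_subset_compl.2 (subset_ballSmul hl1 _ S)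
      have hScompl : ν Sᶜ ≤ 1/2 := by
        rw [prob_compl_eq_one_sub hS]
        rw [tsub_le_iff_right]
        calc (1:ℝ≥0∞) = 1/2 + 1/2 := by rw [ENNReal.add_halves]
          _ ≤ 1/2 + ν S := add_le_add le_rfl hhalf.le
      have hT2 : ν T ≤ 1/2 := (measure_mono hTS).trans hScompl
      have hstep := hexp T hT hcase hT2
      have hstep2 : (1 + ENNReal.ofReal c) * ν T ≤ ν ((ballSmul ℓ (n * kb) S)ᶜ) :=
        hstep.le.trans (measure_mono hkey)
      rcases ih with h | h
      · left
        have hmono : ν T ≤ ν ((ballSmul ℓ (n * kb) S)ᶜ) :=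
          measure_mono (Set.compl_subset_compl.2
            (ballSmul_mono (Nat.mul_le_mul_right kb (Nat.le_succ n)) S))
        exact lt_of_le_of_lt hmono h
      · right
        calc (1 + ENNReal.ofReal c)^(n+1) * ν T
            = (1 + ENNReal.ofReal c)^n * ((1 + ENNReal.ofReal c) * ν T) := by ring
          _ ≤ (1 + ENNReal.ofReal c)^n * ν ((ballSmul ℓ (n * kb) S)ᶜ) :=
              mul_le_mul_of_nonneg_left hstep2 (by positivity)
          _ ≤ ν Sᶜ := h

include hl1 hlinv hlsub hmeas hα hc hexp in
lemma combiner : ∃ K : ℕ, ∀ A : Set X, MeasurableSet A → ENNReal.ofReal α ≤ ν A →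
    ν ((ballSmul ℓ K A)ᶜ) < ENNReal.ofReal α := by
  obtain ⟨N, hN⟩ : ∃ N : ℕ, (1/2 : ℝ) < (1+c)^N * α := by
    obtain ⟨N, hN⟩ := pow_unbounded_of_one_lt ((1/2) / α) (by linarith : (1:ℝ) < 1 + c)
    exact ⟨N, by rw [div_lt_iff₀ hα.1] at hN; linarith⟩
  have hNe : (1 + ENNReal.ofReal c)^N * ENNReal.ofReal α = ENNReal.ofReal ((1+c)^N * α) := by
    rw [ENNReal.ofReal_mul (by positivity), ENNReal.ofReal_pow (by linarith),
      ENNReal.ofReal_add one_pos.le hc.le, ENNReal.ofReal_one]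
  have hNlt : (1:ℝ≥0∞)/2 < (1 + ENNReal.ofReal c)^N * ENNReal.ofReal α := by
    rw [hNe]
    refine (ENNReal.lt_ofReal_iff_toReal_lt ?_).2 ?_
    · simp
    · simpa using hN
  refine ⟨(N + N) * kb, fun A hA hαA => ?_⟩
  -- Phase 1
  have h1 : (1:ℝ≥0∞)/2 < ν (ballSmul ℓ (N * kb) A) := by
    rcases phase1 hl1 hlsub hmeas hexp N hA hαA with h | h
    · exact h
    · exact lt_of_lt_of_le hNlt h
  set S : Set X := ballSmul ℓ (N * kb) A with hS_def
  have hS : MeasurableSet S := measurableSet_ballSmul hmeas hA _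
  have hsub : ballSmul ℓ (N * kb) S ⊆ ballSmul ℓ ((N + N) * kb) A := by
    have := ballSmul_ballSmul hlsub (N * kb) (N * kb) A
    rwa [show N * kb + N * kb = (N+N) * kb by ring] at this
  have hmono : ν ((ballSmul ℓ ((N+N) * kb) A)ᶜ) ≤ ν ((ballSmul ℓ (N * kb) S)ᶜ) :=
    measure_mono (Set.compl_subset_compl.2 hsub)
  rcases phase2 hl1 hlinv hlsub hmeas hexp N hS h1 with h | h
  · exact lt_of_le_of_lt hmono h
  · -- (1+c)^N * Q ≤ ν Sᶜ ≤ 1/2 < (1+c)^N * α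
    have hScompl : ν Sᶜ ≤ 1/2 := by
      rw [prob_compl_eq_one_sub hS, tsub_le_iff_right]
      calc (1:ℝ≥0∞) = 1/2 + 1/2 := by rw [ENNReal.add_halves]
        _ ≤ 1/2 + ν S := add_le_add le_rfl h1.le
    have hQ : (1 + ENNReal.ofReal c)^N * ν ((ballSmul ℓ (N * kb) S)ᶜ)
        < (1 + ENNReal.ofReal c)^N * ENNReal.ofReal α :=
      lt_of_le_of_lt (h.trans hScompl) hNlt
    have hpow0 : ((1 + ENNReal.ofReal c)^N : ℝ≥0∞) ≠ 0 :=
      pow_ne_zero N (by simp)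
    have hpowt : ((1 + ENNReal.ofReal c)^N : ℝ≥0∞) ≠ ∞ := by
      exact ENNReal.pow_ne_top (by simp [ENNReal.add_ne_top])
    rw [ENNReal.mul_lt_mul_iff_right hpow0 hpowt] at hQ
    exact lt_of_le_of_lt hmono hQ

end Expansion

section CutNorm
variable {X : Type*} [MeasurableSpace X] {ν : Measure X} [IsProbabilityMeasure ν]
  {P : Lp ℝ 2 ν →L[ℝ] Lp ℝ 2 ν}
  (hP : ∀ f : Lp ℝ 2 ν, ∀ᵐ x ∂ν, P f x = ∫ y, f y ∂ν)
  {A C : Set X} (hA : MeasurableSet A) (hC : MeasurableSet C)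

omit [IsProbabilityMeasure ν] in
include hP hA in
lemma cut_val (f : Lp ℝ 2 ν) :
    (eLpNorm (A.indicator (fun x => P f x)) 2 ν).toReal
      = |∫ y, f y ∂ν| * Real.sqrt (ν A).toReal := by
  have h1 : A.indicator (fun x => (P f : X → ℝ) x)
      =ᵐ[ν] A.indicator (fun _ => ∫ y, f y ∂ν) :=
    (hP f).mono (fun x hx => by by_cases hxA : x ∈ A <;> simp [Set.indicator, hxA, hx])
  rw [eLpNorm_congr_ae h1, eLpNorm_indicator_const hA two_ne_zero ENNReal.ofNat_ne_top,
    ENNReal.toReal_mul, ← ENNReal.toReal_rpow]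
  simp only [ENNReal.coe_toReal, coe_nnnorm, Real.norm_eq_abs, ENNReal.toReal_ofNat,
    ENNReal.toReal_one, ENNReal.toReal_div, toReal_enorm]
  rw [Real.sqrt_eq_rpow]

include hP hA hC in
lemma cut_val_le {f : Lp ℝ 2 ν} (hf1 : ‖f‖ ≤ 1) (hf2 : ∀ᵐ x ∂ν, x ∉ C → f x = 0) :
    (eLpNorm (A.indicator (fun x => P f x)) 2 ν).toReal
      ≤ Real.sqrt (ν A).toReal * Real.sqrt (ν C).toReal := by
  rw [cut_val hP hA f]
  have hint : |∫ y, f y ∂ν| ≤ Real.sqrt (ν C).toReal := by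
    have hfi : Integrable (f : X → ℝ) ν :=
      (Lp.memLp f).integrable (by norm_num)
    have h0 : ∫ y in Cᶜ, f y ∂ν = 0 := by
      have heq : (f : X → ℝ) =ᵐ[ν.restrict Cᶜ] 0 := by
        filter_upwards [ae_restrict_of_ae hf2, ae_restrict_mem hC.compl] with x h1 h2
        exact h1 h2
      rw [integral_congr_ae heq]
      simp
    have hsplit : ∫ y, f y ∂ν = ∫ y in C, f y ∂ν := by
      rw [← integral_add_compl hC hfi, h0, add_zero]
    rw [hsplit, ← L2.inner_indicatorConstLp_one (𝕜 := ℝ) hC (measure_ne_top ν C) f]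
    calc |inner ℝ (indicatorConstLp 2 hC (measure_ne_top ν C) (1:ℝ)) f|
        ≤ ‖indicatorConstLp 2 hC (measure_ne_top ν C) (1:ℝ)‖ * ‖f‖ :=
          abs_real_inner_le_norm _ _
      _ ≤ ‖indicatorConstLp 2 hC (measure_ne_top ν C) (1:ℝ)‖ * 1 := by
          refine mul_le_mul_of_nonneg_left hf1 (norm_nonneg _)
      _ = Real.sqrt (ν C).toReal := by
          rw [mul_one, norm_indicatorConstLp two_ne_zero ENNReal.ofNat_ne_top]
          simp [Real.sqrt_eq_rpow, measureReal_def]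
  have h2 : (0:ℝ) ≤ Real.sqrt (ν A).toReal := Real.sqrt_nonneg _
  calc |∫ y, f y ∂ν| * Real.sqrt (ν A).toReal
      ≤ Real.sqrt (ν C).toReal * Real.sqrt (ν A).toReal :=
        mul_le_mul_of_nonneg_right hint h2
    _ = _ := mul_comm _ _

include hP hA hC in
lemma cutNorm_le_sqrt :
    cutNorm P A C ≤ Real.sqrt (ν A).toReal * Real.sqrt (ν C).toReal := by
  refine Real.sSup_le ?_ (by positivity)
  rintro x ⟨f, ⟨hf1, hf2⟩, rfl⟩
  exact cut_val_le hP hA hC hf1 hf2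

include hP hA hC in
lemma sqrt_le_cutNorm :
    Real.sqrt (ν A).toReal * Real.sqrt (ν C).toReal ≤ cutNorm P A C := by
  have hbdd : BddAbove ((fun f : Lp ℝ 2 ν =>
      (eLpNorm (A.indicator (fun x => P f x)) 2 ν).toReal) ''
      { f : Lp ℝ 2 ν | ‖f‖ ≤ 1 ∧ ∀ᵐ x ∂ν, x ∉ C → f x = 0 }) := by
    refine ⟨Real.sqrt (ν A).toReal * Real.sqrt (ν C).toReal, ?_⟩
    rintro x ⟨f, ⟨hf1, hf2⟩, rfl⟩
    exact cut_val_le hP hA hC hf1 hf2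
  by_cases hC0 : ν C = 0
  · have h0 : Real.sqrt (ν C).toReal = 0 := by simp [hC0]
    rw [h0, mul_zero]
    exact Real.sSup_nonneg (by rintro x ⟨f, _, rfl⟩; exact ENNReal.toReal_nonneg)
  · obtain ⟨t, ht_def⟩ : ∃ t : ℝ, t = (ν C).toReal := ⟨_, rfl⟩
    have ht : 0 < t := ht_def ▸ ENNReal.toReal_pos hC0 (measure_ne_top ν C)
    have hst : 0 < Real.sqrt t := Real.sqrt_pos.2 ht
    obtain ⟨g, hg_def⟩ : ∃ g : Lp ℝ 2 ν,
        g = indicatorConstLp 2 hC (measure_ne_top ν C) (1:ℝ) := ⟨_, rfl⟩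
    obtain ⟨f, hf_def⟩ : ∃ f : Lp ℝ 2 ν, f = (Real.sqrt t)⁻¹ • g := ⟨_, rfl⟩
    have hgnorm : ‖g‖ = Real.sqrt t := by
      rw [hg_def, norm_indicatorConstLp two_ne_zero ENNReal.ofNat_ne_top, ht_def]
      simp [Real.sqrt_eq_rpow, measureReal_def]
    have hf1 : ‖f‖ ≤ 1 := by
      rw [hf_def, norm_smul, Real.norm_eq_abs, abs_of_nonneg (inv_nonneg.2 hst.le), hgnorm,
        inv_mul_cancel₀ hst.ne']
    have hg2 : ∀ᵐ x ∂ν, x ∉ C → g x = 0 := hg_def ▸ indicatorConstLp_coeFn_notMem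
    have hf2 : ∀ᵐ x ∂ν, x ∉ C → f x = 0 := by
      rw [hf_def]
      filter_upwards [Lp.coeFn_smul ((Real.sqrt t)⁻¹) g, hg2] with x h1 h2 hx
      rw [h1, Pi.smul_apply, h2 hx, smul_zero]
    have hint : ∫ y, f y ∂ν = Real.sqrt t := by
      have h1 : ∫ y, f y ∂ν = (Real.sqrt t)⁻¹ * ∫ y, g y ∂ν := by
        rw [hf_def, integral_congr_ae (Lp.coeFn_smul ((Real.sqrt t)⁻¹) g)]
        simp [integral_smul, integral_const_mul]
      have h2 : ∫ y, g y ∂ν = t := by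
        rw [hg_def, integral_indicatorConstLp, smul_eq_mul, mul_one, ht_def, measureReal_def]
      rw [h1, h2]
      field_simp
      rw [Real.sq_sqrt ht.le]
    have hval : (eLpNorm (A.indicator (fun x => P f x)) 2 ν).toReal
        = Real.sqrt (ν A).toReal * Real.sqrt t := by
      rw [cut_val hP hA f, hint, abs_of_nonneg hst.le, mul_comm]
    calc Real.sqrt (ν A).toReal * Real.sqrt (ν C).toReal
        = (eLpNorm (A.indicator (fun x => P f x)) 2 ν).toReal := by rw [hval, ht_def]
      _ ≤ cutNorm P A C := le_csSup hbdd ⟨f, ⟨hf1, hf2⟩, rfl⟩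

end CutNorm

/-- **Proposition 4.8.** A measurable action `ρ : Γ ↷ (X,ν)` on a
probability space is asymptotically expanding in measure if and only if the averaging
projection `P_X` on `L²(X,ν)` is `ρ`-quasi-local. -/
theorem asymptoticallyExpanding_iff_averaging_quasiLocal {Γ X : Type*} [Group Γ]
    [Countable Γ] [MulAction Γ X] [MeasurableSpace X]
    (ℓ : Γ → ℕ) (hl0 : ∀ γ : Γ, ℓ γ = 0 ↔ γ = 1) (hlinv : ∀ γ : Γ, ℓ γ⁻¹ = ℓ γ)
    (hlsub : ∀ γ₁ γ₂ : Γ, ℓ (γ₁ * γ₂) ≤ ℓ γ₁ + ℓ γ₂)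
    (hlprop : ∀ k : ℕ, {γ : Γ | ℓ γ ≤ k}.Finite)
    (ν : Measure X) [IsProbabilityMeasure ν]
    (hmeas : ∀ γ : Γ, Measurable (fun x : X => γ • x))
    (P : Lp ℝ 2 ν →L[ℝ] Lp ℝ 2 ν)
    (hP : ∀ f : Lp ℝ 2 ν, ∀ᵐ x ∂ν, P f x = ∫ y, f y ∂ν) :
    AsymptoticallyExpanding ℓ ν ↔ QuasiLocal ℓ ν P := by
  have hl1 : ℓ (1:Γ) = 0 := (hl0 1).2 rfl
  constructor
  · -- expanding → quasi-local
    rintro ⟨c, k, hcpos, hexp⟩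
    intro ε hε
    have hαIoc : min (ε^2/2) (1/2) ∈ Set.Ioc (0:ℝ) (1/2) :=
      ⟨lt_min (by positivity) one_half_pos, min_le_right _ _⟩
    set α : ℝ := min (ε^2/2) (1/2) with hα_def
    obtain ⟨K, hK⟩ := combiner hl1 hlinv hlsub hmeas hαIoc (hcpos α hαIoc)
      (hexp α hαIoc)
    refine ⟨K, fun A C hA hC hnull => ?_⟩
    have hle := cutNorm_le_sqrt hP hA hC
    have hA1 : Real.sqrt (ν A).toReal ≤ 1 :=
      Real.sqrt_le_one.2 (by simpa using ENNReal.toReal_mono ENNReal.one_ne_top prob_le_one)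
    have hC1 : Real.sqrt (ν C).toReal ≤ 1 :=
      Real.sqrt_le_one.2 (by simpa using ENNReal.toReal_mono ENNReal.one_ne_top prob_le_one)
    have hαε : α < ε^2 := lt_of_le_of_lt (min_le_left _ _) (by nlinarith)
    have hsqrtα : ∀ r : ℝ, r < α → 0 ≤ r → Real.sqrt r < ε := by
      intro r hr hr0
      have h1 : Real.sqrt r < Real.sqrt (ε^2) :=
        Real.sqrt_lt_sqrt hr0 (lt_trans hr hαε)
      rwa [Real.sqrt_sq hε.le] at h1
    by_cases hcase : ENNReal.ofReal α ≤ ν A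
    · have hCcompl := hK A hA hcase
      have hCsub : C ⊆ (ballSmul ℓ K A ∩ C) ∪ (ballSmul ℓ K A)ᶜ := by
        intro x hx
        by_cases h : x ∈ ballSmul ℓ K A
        exacts [Or.inl ⟨h, hx⟩, Or.inr h]
      have hνC : ν C < ENNReal.ofReal α :=
        calc ν C ≤ ν ((ballSmul ℓ K A ∩ C) ∪ (ballSmul ℓ K A)ᶜ) := measure_mono hCsub
          _ ≤ ν (ballSmul ℓ K A ∩ C) + ν ((ballSmul ℓ K A)ᶜ) := measure_union_le _ _
          _ = ν ((ballSmul ℓ K A)ᶜ) := by rw [hnull, zero_add]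
          _ < ENNReal.ofReal α := hCcompl
      have hCr : (ν C).toReal < α :=
        (ENNReal.lt_ofReal_iff_toReal_lt (measure_ne_top ν C)).1 hνC
      have hCs : Real.sqrt (ν C).toReal < ε := hsqrtα _ hCr ENNReal.toReal_nonneg
      calc cutNorm P A C ≤ Real.sqrt (ν A).toReal * Real.sqrt (ν C).toReal := hle
        _ ≤ 1 * Real.sqrt (ν C).toReal :=
            mul_le_mul_of_nonneg_right hA1 (Real.sqrt_nonneg _)
        _ = Real.sqrt (ν C).toReal := one_mul _
        _ < ε := hCs
    · push_neg at hcase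
      have hAr : (ν A).toReal < α :=
        (ENNReal.lt_ofReal_iff_toReal_lt (measure_ne_top ν A)).1 hcase
      have hAs : Real.sqrt (ν A).toReal < ε := hsqrtα _ hAr ENNReal.toReal_nonneg
      calc cutNorm P A C ≤ Real.sqrt (ν A).toReal * Real.sqrt (ν C).toReal := hle
        _ ≤ Real.sqrt (ν A).toReal * 1 :=
            mul_le_mul_of_nonneg_left hC1 (Real.sqrt_nonneg _)
        _ = Real.sqrt (ν A).toReal := mul_one _
        _ < ε := hAs
  · -- quasi-local → expanding
    intro hQL
    refine ⟨fun _ => 1/2,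
      fun α => if h : (0:ℝ) < α then (hQL (α/2) (by linarith)).choose else 0,
      fun α hα => one_half_pos, ?_⟩
    intro α hα A hA hαA hA2
    simp only [dif_pos hα.1]
    have hspec := (hQL (α/2) (by linarith [hα.1] : (0:ℝ) < α/2)).choose_spec
    set K := (hQL (α/2) (by linarith [hα.1] : (0:ℝ) < α/2)).choose with hK_def
    have hB : MeasurableSet (ballSmul ℓ K A) := measurableSet_ballSmul hmeas hA K
    have hnull : ν (ballSmul ℓ K A ∩ (ballSmul ℓ K A)ᶜ) = 0 := by simp
    have hcut := hspec A (ballSmul ℓ K A)ᶜ hA hB.compl hnull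
    have hlow := sqrt_le_cutNorm hP hA hB.compl
    have h1 : Real.sqrt (ν A).toReal * Real.sqrt (ν (ballSmul ℓ K A)ᶜ).toReal < α/2 :=
      lt_of_le_of_lt hlow hcut
    have haα : α ≤ (ν A).toReal :=
      (ENNReal.ofReal_le_iff_le_toReal (measure_ne_top ν A)).1 hαA
    have h2 : Real.sqrt α ≤ Real.sqrt (ν A).toReal := Real.sqrt_le_sqrt haα
    have hsa : 0 < Real.sqrt α := Real.sqrt_pos.2 hα.1
    have hss : Real.sqrt α * Real.sqrt α = α := Real.mul_self_sqrt hα.1.le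
    have h3 : Real.sqrt α * Real.sqrt (ν (ballSmul ℓ K A)ᶜ).toReal
        < Real.sqrt α * (Real.sqrt α / 2) := by
      calc Real.sqrt α * Real.sqrt (ν (ballSmul ℓ K A)ᶜ).toReal
          ≤ Real.sqrt (ν A).toReal * Real.sqrt (ν (ballSmul ℓ K A)ᶜ).toReal :=
            mul_le_mul_of_nonneg_right h2 (Real.sqrt_nonneg _)
        _ < α/2 := h1
        _ = Real.sqrt α * (Real.sqrt α / 2) := by
            rw [show Real.sqrt α * (Real.sqrt α / 2) = Real.sqrt α * Real.sqrt α / 2 by ring,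
              hss]
    have h4 : Real.sqrt (ν (ballSmul ℓ K A)ᶜ).toReal < Real.sqrt α / 2 :=
      lt_of_mul_lt_mul_left h3 hsa.le
    have h5 : (ν (ballSmul ℓ K A)ᶜ).toReal < α/4 := by
      calc (ν (ballSmul ℓ K A)ᶜ).toReal
          = Real.sqrt (ν (ballSmul ℓ K A)ᶜ).toReal
            * Real.sqrt (ν (ballSmul ℓ K A)ᶜ).toReal :=
            (Real.mul_self_sqrt ENNReal.toReal_nonneg).symm
        _ < (Real.sqrt α / 2) * (Real.sqrt α / 2) :=
            mul_self_lt_mul_self (Real.sqrt_nonneg _) h4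
        _ = α/4 := by rw [div_mul_div_comm, hss]; norm_num
    -- ENNReal goal
    have hlhs_fin : (1 + ENNReal.ofReal (1/2)) * ν A ≠ ∞ :=
      ENNReal.mul_ne_top (ENNReal.add_ne_top.2 ⟨ENNReal.one_ne_top, ENNReal.ofReal_ne_top⟩)
        (measure_ne_top ν A)
    rw [← ENNReal.toReal_lt_toReal hlhs_fin (measure_ne_top ν _)]
    rw [ENNReal.toReal_mul, ENNReal.toReal_add ENNReal.one_ne_top ENNReal.ofReal_ne_top,
      ENNReal.toReal_ofReal (by norm_num : (0:ℝ) ≤ 1/2), ENNReal.toReal_one]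
    have hAhalf : (ν A).toReal ≤ 1/2 := by
      have := ENNReal.toReal_mono (by simp : (1/2 : ℝ≥0∞) ≠ ∞) hA2
      simpa using this
    have hsum : (ν (ballSmul ℓ K A)).toReal + (ν (ballSmul ℓ K A)ᶜ).toReal = 1 := by
      rw [← ENNReal.toReal_add (measure_ne_top _ _) (measure_ne_top _ _),
        measure_add_measure_compl hB]
      simp
    have hαhalf : α ≤ 1/2 := hα.2
    linarith
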